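/- Let M be a proper ascreen QGCR-null submanifold of an indefinite nearly cosymplectic manifold. Then for all X, Y ∈ Γ(D) and E ∈ Γ(Rad TM): 2ḡ(h(X,Y), E) = ḡ(∇̄_X(φY), φE) + ḡ(∇̄_Y(φX), φE), where h is the second fundamental tensor of M. -/
import Mathlib


/-- Let `M` be a proper ascreen QGCR-null submanifold of an indefinite
nearly cosymplectic manifold `(M̄, φ, ξ, η, ḡ)`, with invariant distribution `D` on
which `η` vanishes, Gauss formula `∇̄_X Y = ∇_X Y + h(X,Y)`, radical distribution
`Rad TM` orthogonal to `TM`.  Modelled abstractly with `F` = functions,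
`V` = ambient vector fields, `nabla` the ambient Levi-Civita connection (metric),
`H̄` defined by `∇̄_X ξ = -H̄X`, and the nearly cosymplectic condition.  Then for all
`X, Y ∈ Γ(D)` and `E ∈ Γ(Rad TM)`:
`2 ḡ(h(X,Y), E) = ḡ(∇̄_X(φY), φE) + ḡ(∇̄_Y(φX), φE)`. -/
theorem ascreen_QGCR_second_fundamental_identity
    {F V : Type*} [CommRing F] [AddCommGroup V] [Module F V]
    (g : V →ₗ[F] V →ₗ[F] F) (φ H : V →ₗ[F] V) (ξ : V) (η : V →ₗ[F] F)
    (nabla nablaM : V → V → V) (h : V → V → V) (act : V → F → F)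
    (TM D Rad : Submodule F V)
    (hgsymm : ∀ X Y, g X Y = g Y X)
    (hphi2 : ∀ X, φ (φ X) = -X + η X • ξ)
    (hηξ : η ξ = 1)
    (hηφ : ∀ X, η (φ X) = 0)
    (hφξ : φ ξ = 0)
    (hcompat : ∀ X Y, g (φ X) (φ Y) = g X Y - η X * η Y)
    (hηg : ∀ X, η X = g ξ X)
    (hmetric : ∀ X Y Z, act X (g Y Z) = g (nabla X Y) Z + g Y (nabla X Z))
    (hnearly : ∀ X Y, (nabla X (φ Y) - φ (nabla X Y)) + (nabla Y (φ X) - φ (nabla Y X)) = 0)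
    (hH : ∀ X, nabla X ξ = -(H X))
    (hHskew : ∀ X Y, g (H X) Y = - g X (H Y))
    -- Gauss formula and symmetry of `h` on `TM`
    (hGauss : ∀ X ∈ TM, ∀ Y ∈ TM, nabla X Y = nablaM X Y + h X Y)
    (hMtang : ∀ X ∈ TM, ∀ Y ∈ TM, nablaM X Y ∈ TM)
    (hhsymm : ∀ X ∈ TM, ∀ Y ∈ TM, h X Y = h Y X)
    -- `D ⊆ TM`, the radical is orthogonal to `TM`, and `η` vanishes on `D` (ascreen)
    (hDle : D ≤ TM)
    (hRadortho : ∀ E ∈ Rad, ∀ Z ∈ TM, g E Z = 0)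
    (hDortho : ∀ X ∈ D, g ξ X = 0) :
    ∀ X ∈ D, ∀ Y ∈ D, ∀ E ∈ Rad,
      2 * g (h X Y) E = g (nabla X (φ Y)) (φ E) + g (nabla Y (φ X)) (φ E) := by
  intro X hX Y hY E hE
  have hXTM : X ∈ TM := hDle hX
  have hYTM : Y ∈ TM := hDle hY
  have act0 : act X 0 = 0 := by simpa using hmetric X 0 0
  have act0' : act Y 0 = 0 := by simpa using hmetric Y 0 0
  -- nearly cosymplectic rearranged
  have hsum : nabla X (φ Y) + nabla Y (φ X) = φ (nabla X Y) + φ (nabla Y X) := by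
    have h0 := hnearly X Y
    have h1 : nabla X (φ Y) + nabla Y (φ X) - (φ (nabla X Y) + φ (nabla Y X)) = 0 := by
      rw [← h0]; abel
    exact sub_eq_zero.mp h1
  -- η(∇_X Y) = g(Y, HX)
  have hA : g (nabla X Y) ξ = g Y (H X) := by
    have hm := hmetric X Y ξ
    rw [hH] at hm
    have hYξ : g Y ξ = 0 := by rw [hgsymm]; exact hDortho Y hY
    rw [hYξ, act0, map_neg] at hm
    linear_combination -hm
  have hB : g (nabla Y X) ξ = g X (H Y) := by
    have hm := hmetric Y X ξ
    rw [hH] at hm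
    have hXξ : g X ξ = 0 := by rw [hgsymm]; exact hDortho X hX
    rw [hXξ, act0', map_neg] at hm
    linear_combination -hm
  have hηsum : η (nabla X Y) + η (nabla Y X) = 0 := by
    rw [hηg, hηg, hgsymm ξ (nabla X Y), hgsymm ξ (nabla Y X), hA, hB]
    have := hHskew X Y
    have h2 : g Y (H X) = g (H X) Y := hgsymm _ _
    linear_combination h2 + this
  -- Gauss: g(∇_X Y, E) = g(h(X,Y), E)
  have gAE : g (nabla X Y) E = g (h X Y) E := by
    rw [hGauss X hXTM Y hYTM, map_add, LinearMap.add_apply]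
    have : g (nablaM X Y) E = 0 := by
      rw [hgsymm]; exact hRadortho E hE _ (hMtang X hXTM Y hYTM)
    rw [this, zero_add]
  have gBE : g (nabla Y X) E = g (h X Y) E := by
    rw [hGauss Y hYTM X hXTM, map_add, LinearMap.add_apply]
    have : g (nablaM Y X) E = 0 := by
      rw [hgsymm]; exact hRadortho E hE _ (hMtang Y hYTM X hXTM)
    rw [this, zero_add, hhsymm Y hYTM X hXTM]
  -- combine
  have key : g (nabla X (φ Y)) (φ E) + g (nabla Y (φ X)) (φ E)
      = g (φ (nabla X Y)) (φ E) + g (φ (nabla Y X)) (φ E) := by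
    have := congrArg (fun v => g v (φ E)) hsum
    simpa [map_add] using this
  rw [key, hcompat, hcompat]
  linear_combination -gAE - gBE + η E * hηsum
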